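/- Let Λ ⊆ ℂ² be a lattice, D nonscalar with D² = d·I, d < 0 a nonsquare integer (so d ≤ -1), and DΛ ⊆ Λ. Then no hermitian form H in N_D = {H ∈ NS(ℂ²/Λ) : H(·,D·) ∈ NS(ℂ²/Λ)} is positive definite. -/

import Mathlib

open Matrix Complex
open scoped ComplexOrder

/-- `H ∈ NS(ℂ²/Λ)`: hermitian with `Im H(Λ,Λ) ⊆ ℤ`. -/
def inNS (Λ : AddSubgroup (Fin 2 → ℂ)) (M : Matrix (Fin 2) (Fin 2) ℂ) : Prop :=
  M.IsHermitian ∧ ∀ x ∈ Λ, ∀ y ∈ Λ, ∃ k : ℤ, (x ⬝ᵥ M.mulVec (star y)).im = (k : ℝ)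

/-- `N_D = {H ∈ NS : H(·,D·) ∈ NS}`. -/
def ND (Λ : AddSubgroup (Fin 2 → ℂ)) (D : Matrix (Fin 2) (Fin 2) ℂ) :
    Set (Matrix (Fin 2) (Fin 2) ℂ) :=
  {M | inNS Λ M ∧ inNS Λ (M * D.map (starRingEnd ℂ))}

/-- for `d < 0` a nonsquare integer, no form in `N_D` is
positive definite. -/
theorem stmt_12 (d : ℤ) (hd : ¬ ∃ n : ℤ, n ^ 2 = d) (hdneg : d < 0)
    (b : Fin 4 → (Fin 2 → ℂ)) (hb : LinearIndependent ℝ b)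
    (Λ : AddSubgroup (Fin 2 → ℂ)) (hΛ : Λ = AddSubgroup.closure (Set.range b))
    (D : Matrix (Fin 2) (Fin 2) ℂ)
    (hD2 : D ^ 2 = (d : ℂ) • (1 : Matrix (Fin 2) (Fin 2) ℂ))
    (hDns : ¬ ∃ c : ℂ, D = c • (1 : Matrix (Fin 2) (Fin 2) ℂ))
    (hDΛ : ∀ v ∈ Λ, D.mulVec v ∈ Λ) :
    ∀ M ∈ ND Λ D, ¬ M.PosDef := by
  intro M hM hpos
  set C : Matrix (Fin 2) (Fin 2) ℂ := D.map (starRingEnd ℂ) with hCdef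
  obtain ⟨⟨hMh, -⟩, ⟨hNh, -⟩⟩ := hM
  -- key commutation: Cᴴ * M = M * C
  have hkey : Cᴴ * M = M * C := by
    have h1 : (M * C)ᴴ = M * C := hNh
    rwa [conjTranspose_mul, hMh.eq] at h1
  -- C * C = d • 1
  have hC2 : C * C = (d : ℂ) • 1 := by
    have h1 : C * C = (D * D).map (starRingEnd ℂ) := (Matrix.map_mul).symm
    rw [h1, ← pow_two, hD2]
    ext i j
    simp [Matrix.one_apply, apply_ite (starRingEnd ℂ)]
  -- Cᴴ * (M * C) = d • M
  have hMC : Cᴴ * (M * C) = (d : ℂ) • M := by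
    rw [← mul_assoc, hkey, mul_assoc, hC2, mul_smul_comm, mul_one]
  -- the main quadratic-form identity
  have hquad : ∀ x : Fin 2 → ℂ,
      star (C.mulVec x) ⬝ᵥ M.mulVec (C.mulVec x)
        = (d : ℂ) * (star x ⬝ᵥ M.mulVec x) := by
    intro x
    rw [Matrix.star_mulVec, Matrix.mulVec_mulVec, Matrix.dotProduct_mulVec,
      Matrix.vecMul_vecMul, hMC, ← Matrix.dotProduct_mulVec,
      Matrix.smul_mulVec]
    rw [dotProduct_smul, smul_eq_mul]
  -- pick a nonzero vector
  set x : Fin 2 → ℂ := fun _ => 1 with hxdef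
  have hx : x ≠ 0 := by
    intro h
    have := congrFun h 0
    simp [hxdef] at this
  have hc : 0 < star x ⬝ᵥ M.mulVec x := hpos.dotProduct_mulVec_pos hx
  have hge : 0 ≤ star (C.mulVec x) ⬝ᵥ M.mulVec (C.mulVec x) :=
    hpos.posSemidef.dotProduct_mulVec_nonneg (C.mulVec x)
  rw [hquad x] at hge
  have hdneg' : (d : ℂ) < 0 := by exact_mod_cast hdneg
  have : (d : ℂ) * (star x ⬝ᵥ M.mulVec x) < 0 := mul_neg_of_neg_of_pos hdneg' hc
  exact absurd hge this.not_ge
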